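/- Let m ≥ n be positive integers and z_1,...,z_n be unimodular complex numbers (|z_k| = 1). Then max_{1 ≤ ν ≤ m} |∑_{k=1}^n z_k^ν| ≥ √(n(1 − (n−1)/m)). -/

import Mathlib

open Finset Complex Matrix

lemma aux_trace {ι : Type*} [Fintype ι] (B : Matrix ι ι ℂ)
    (h : ∀ j k, B k j = (starRingEnd ℂ) (B j k)) :
    Matrix.trace (B * B) = ∑ j, ∑ k, (Complex.normSq (B j k) : ℂ) := by
  simp only [Matrix.trace, Matrix.diag_apply, Matrix.mul_apply]
  refine Finset.sum_congr rfl fun j _ => Finset.sum_congr rfl fun k _ => ?_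
  rw [h j k, Complex.mul_conj]

theorem stmt_3 (n m : ℕ) (hn : 1 ≤ n) (hnm : n ≤ m) (z : Fin n → ℂ)
    (hz : ∀ k, ‖z k‖ = 1) :
    ∃ ν : ℕ, 1 ≤ ν ∧ ν ≤ m ∧
      Real.sqrt ((n : ℝ) * (1 - ((n : ℝ) - 1) / (m : ℝ))) ≤ ‖∑ k, z k ^ ν‖ := by
  classical
  have hm1 : 1 ≤ m := hn.trans hnm
  set s : ℕ → ℂ := fun ν => ∑ k, z k ^ ν with hsdef
  have hz1 : ∀ j, z j * star (z j) = 1 := by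
    intro j
    rw [show star (z j) = (starRingEnd ℂ) (z j) from rfl, Complex.mul_conj]
    norm_cast
    rw [← Complex.sq_norm, hz, one_pow]
  set A : Matrix (Fin n) (Fin (m+1)) ℂ := fun j ν => z j ^ (ν : ℕ) with hA
  obtain ⟨ν₀, hν₀mem, hν₀max⟩ :=
    Finset.exists_max_image (Finset.Icc 1 m) (fun ν => ‖s ν‖) ⟨1, by simp [hm1]⟩
  obtain ⟨hν₀1, hν₀m⟩ := Finset.mem_Icc.1 hν₀mem
  set M : ℝ := ‖s ν₀‖ with hM
  refine ⟨ν₀, hν₀1, hν₀m, ?_⟩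
  have htr : Matrix.trace ((A * Aᴴ) * (A * Aᴴ)) = Matrix.trace ((Aᴴ * A) * (Aᴴ * A)) := by
    calc Matrix.trace ((A * Aᴴ) * (A * Aᴴ)) = Matrix.trace (A * (Aᴴ * (A * Aᴴ))) := by
          simp [Matrix.mul_assoc]
      _ = Matrix.trace ((Aᴴ * (A * Aᴴ)) * A) := Matrix.trace_mul_comm _ _
      _ = Matrix.trace ((Aᴴ * A) * (Aᴴ * A)) := by simp [Matrix.mul_assoc]
  have hB : ∀ j k, (A * Aᴴ) k j = (starRingEnd ℂ) ((A * Aᴴ) j k) := by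
    intro j k
    simp [Matrix.mul_apply, Matrix.conjTranspose_apply, map_sum, mul_comm]
  have hC : ∀ μ ν, (Aᴴ * A) ν μ = (starRingEnd ℂ) ((Aᴴ * A) μ ν) := by
    intro μ ν
    simp [Matrix.mul_apply, Matrix.conjTranspose_apply, map_sum, mul_comm]
  have hreal : (∑ j, ∑ k, Complex.normSq ((A * Aᴴ) j k))
      = ∑ μ, ∑ ν, Complex.normSq ((Aᴴ * A) μ ν) := by
    have hre : (∑ j, ∑ k, (Complex.normSq ((A * Aᴴ) j k) : ℂ))
        = ∑ μ, ∑ ν, (Complex.normSq ((Aᴴ * A) μ ν) : ℂ) := by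
      rw [← aux_trace _ hB, ← aux_trace _ hC, htr]
    exact_mod_cast hre
  have hsq : ∀ d ∈ Finset.Icc 1 m, Complex.normSq (s d) ≤ M ^ 2 := by
    intro d hd
    rw [Complex.normSq_eq_norm_sq]
    have := hν₀max _ hd
    nlinarith [norm_nonneg (s d), norm_nonneg (s ν₀)]
  have hz1' : ∀ j, z j * (starRingEnd ℂ) (z j) = 1 := hz1
  -- diagonal entries of A * Aᴴ
  have hBdiag : ∀ j, (A * Aᴴ) j j = ((m : ℂ) + 1) := by
    intro j
    simp only [Matrix.mul_apply, Matrix.conjTranspose_apply]; simp only [hA]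
    rw [Finset.sum_congr rfl fun x _ => by rw [star_pow, ← mul_pow, hz1 j, one_pow]]
    simp
  -- entries of Aᴴ * A
  have hCval : ∀ μ ν : Fin (m+1), (μ : ℕ) ≤ ν → (Aᴴ * A) μ ν = s ((ν : ℕ) - μ) := by
    intro μ ν h
    simp only [Matrix.mul_apply, Matrix.conjTranspose_apply]; simp only [hA, hsdef]
    refine Finset.sum_congr rfl fun j _ => ?_
    have hsplit : z j ^ (ν : ℕ) = z j ^ ((ν : ℕ) - μ) * z j ^ (μ : ℕ) := by
      rw [← pow_add]; congr 1; omega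
    rw [hsplit, show star (z j ^ (μ:ℕ)) * (z j ^ ((ν:ℕ)-μ) * z j ^ (μ:ℕ))
      = z j ^ ((ν:ℕ)-μ) * (z j * star (z j)) ^ (μ:ℕ) from by rw [star_pow, mul_pow]; ring,
      hz1, one_pow, mul_one]
  have hCnorm : ∀ μ ν : Fin (m+1), μ ≠ ν → Complex.normSq ((Aᴴ * A) μ ν) ≤ M ^ 2 := by
    intro μ ν hne
    have hne' : (μ : ℕ) ≠ (ν : ℕ) := fun e => hne (Fin.ext e)
    rcases le_total (μ : ℕ) (ν : ℕ) with h | h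
    · rw [hCval μ ν h]
      exact hsq _ (Finset.mem_Icc.2 ⟨by omega, by omega⟩)
    · have hre : Complex.normSq ((Aᴴ * A) μ ν) = Complex.normSq ((Aᴴ * A) ν μ) := by
        rw [hC μ ν, Complex.normSq_conj]
      rw [hre, hCval ν μ h]
      exact hsq _ (Finset.mem_Icc.2 ⟨by omega, by omega⟩)
  -- lower bound: diagonal of A * Aᴴ
  have h1 : (n:ℝ) * ((m:ℝ)+1)^2 ≤ ∑ j, ∑ k, Complex.normSq ((A * Aᴴ) j k) := by
    have hdiag : ∀ j : Fin n, ((m:ℝ)+1)^2 ≤ ∑ k, Complex.normSq ((A * Aᴴ) j k) := by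
      intro j
      have h := Finset.single_le_sum (f := fun k => Complex.normSq ((A * Aᴴ) j k))
        (fun k _ => Complex.normSq_nonneg _) (Finset.mem_univ j)
      refine le_trans ?_ h
      show ((m:ℝ)+1)^2 ≤ Complex.normSq ((A * Aᴴ) j j)
      rw [hBdiag j]
      apply le_of_eq
      simp [Complex.normSq_apply]
      ring
    calc (n:ℝ) * ((m:ℝ)+1)^2 = ∑ _j : Fin n, ((m:ℝ)+1)^2 := by
          simp [Finset.sum_const, mul_comm]
      _ ≤ _ := Finset.sum_le_sum fun j _ => hdiag j
  -- upper bound on the other side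
  have hM2nonneg : (0:ℝ) ≤ M ^ 2 := sq_nonneg M
  have h2 : (∑ μ, ∑ ν, Complex.normSq ((Aᴴ * A) μ ν))
      ≤ ((m:ℝ)+1) * ((n:ℝ)^2 + (m:ℝ) * M^2) := by
    have hterm : ∀ μ ν : Fin (m+1),
        Complex.normSq ((Aᴴ * A) μ ν) ≤ if μ = ν then (n:ℝ)^2 else M^2 := by
      intro μ ν
      by_cases hμν : μ = ν
      · subst hμν
        rw [if_pos rfl, hCval μ μ le_rfl, Nat.sub_self]
        have : s 0 = (n : ℂ) := by simp [hsdef]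
        rw [this]
        simp [Complex.normSq_apply]
        ring_nf
        simp [sq]
      · rw [if_neg hμν]
        exact hCnorm μ ν hμν
    have hinner : ∀ μ : Fin (m+1),
        (∑ ν, if μ = ν then (n:ℝ)^2 else M^2) = (n:ℝ)^2 + (m:ℝ) * M^2 := by
      intro μ
      have : (∑ ν : Fin (m+1), if μ = ν then (n:ℝ)^2 else M^2)
          = (∑ ν : Fin (m+1), ((if μ = ν then (n:ℝ)^2 - M^2 else 0) + M^2)) := by
        refine Finset.sum_congr rfl fun ν _ => ?_
        split_ifs <;> ring
      rw [this, Finset.sum_add_distrib, Finset.sum_ite_eq]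
      simp
      ring
    calc (∑ μ, ∑ ν, Complex.normSq ((Aᴴ * A) μ ν))
        ≤ ∑ μ : Fin (m+1), ∑ ν : Fin (m+1), (if μ = ν then (n:ℝ)^2 else M^2) :=
          Finset.sum_le_sum fun μ _ => Finset.sum_le_sum fun ν _ => hterm μ ν
      _ = ∑ _μ : Fin (m+1), ((n:ℝ)^2 + (m:ℝ) * M^2) :=
          Finset.sum_congr rfl fun μ _ => hinner μ
      _ = ((m:ℝ)+1) * ((n:ℝ)^2 + (m:ℝ) * M^2) := by
          simp [Finset.sum_const, mul_comm]
          ring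
  have hcomb : (n:ℝ) * ((m:ℝ)+1)^2 ≤ ((m:ℝ)+1) * ((n:ℝ)^2 + (m:ℝ) * M^2) :=
    h1.trans (hreal ▸ h2)
  have hpos : (0:ℝ) < (m:ℝ)+1 := by positivity
  have hstep : (n:ℝ) * ((m:ℝ)+1) ≤ (n:ℝ)^2 + (m:ℝ) * M^2 := by
    refine le_of_mul_le_mul_left ?_ hpos
    calc ((m:ℝ)+1) * ((n:ℝ)*((m:ℝ)+1)) = (n:ℝ) * ((m:ℝ)+1)^2 := by ring
      _ ≤ ((m:ℝ)+1) * ((n:ℝ)^2 + (m:ℝ) * M^2) := hcomb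
  have hm0 : (0:ℝ) < (m:ℝ) := by exact_mod_cast hm1
  have hfin : (n:ℝ) * (1 - ((n:ℝ)-1)/(m:ℝ)) ≤ M^2 := by
    rw [show (n:ℝ) * (1 - ((n:ℝ)-1)/(m:ℝ)) = ((n:ℝ) * ((m:ℝ) - ((n:ℝ)-1)))/(m:ℝ) from by
      field_simp]
    rw [div_le_iff₀ hm0]
    nlinarith [hstep]
  calc Real.sqrt ((n:ℝ) * (1 - ((n:ℝ)-1)/(m:ℝ))) ≤ Real.sqrt (M^2) := Real.sqrt_le_sqrt hfin
    _ = M := Real.sqrt_sq (norm_nonneg _)
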